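/- Let r be a regular reward function and s > 1. For i ≥ 0 let κ̄_s^{(i)} denote the i-fold iterate of κ̄_s (with κ̄_s^{(0)}(x) = x), and let τ_s^{(i)} be the unique point with r'(τ_s^{(i)}) = r'(0)/s^i. Then: (i) for every i ≥ 0 and x ≥ 0, κ̄_s^{(i)}(x) = κ_{s^i}(max(x, τ_s^{(i)})); and (ii) for every x ≥ 0, the least nonnegative integer i with κ̄_s^{(i)}(x) = 0 equals M_s(x) := ⌈ln(r'(0)/r'(x)) / ln s⌉. -/

import Mathlib

open Set Filter MeasureTheory

/-- A regular reward function `r` with derivative `r'`: `r : [0,∞) → [0,∞)` is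
nondecreasing, Lipschitz, strictly concave, differentiable, with `r 0 = 0`; its
derivative `r'` is continuous, strictly decreasing, positive, and tends to `0` at `+∞`.
For each `s ≥ 1`, `τ s` is the unique point with `r' (τ s) = r' 0 / s`, and
`κ s : [τ s, ∞) → [0, ∞)` is defined by the relation `r' (κ s x) = s * r' x`
(for `s = 1` these reduce to `τ 1 = 0` and `κ 1 = id`); regularity means `κ s` is
convex on `[τ s, ∞)` for all `s > 1`. -/
structure RegularReward where
  r : ℝ → ℝ
  r' : ℝ → ℝ
  r_zero : r 0 = 0
  r_nonneg : ∀ x : ℝ, 0 ≤ x → 0 ≤ r x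
  r_mono : MonotoneOn r (Ici (0 : ℝ))
  r_lip : ∃ K : NNReal, LipschitzOnWith K r (Ici (0 : ℝ))
  r_strictConcave : StrictConcaveOn ℝ (Ici (0 : ℝ)) r
  r_hasDeriv : ∀ x : ℝ, 0 ≤ x → HasDerivWithinAt r (r' x) (Ici (0 : ℝ)) x
  deriv_cont : ContinuousOn r' (Ici (0 : ℝ))
  deriv_strictAnti : StrictAntiOn r' (Ici (0 : ℝ))
  deriv_pos : ∀ x : ℝ, 0 ≤ x → 0 < r' x
  deriv_tendsto_zero : Tendsto r' atTop (nhds 0)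
  τ : ℝ → ℝ
  κ : ℝ → ℝ → ℝ
  τ_nonneg : ∀ s : ℝ, 1 ≤ s → 0 ≤ τ s
  τ_spec : ∀ s : ℝ, 1 ≤ s → r' (τ s) = r' 0 / s
  κ_nonneg : ∀ s : ℝ, 1 ≤ s → ∀ x : ℝ, τ s ≤ x → 0 ≤ κ s x
  κ_spec : ∀ s : ℝ, 1 ≤ s → ∀ x : ℝ, τ s ≤ x → r' (κ s x) = s * r' x
  κ_convex : ∀ s : ℝ, 1 < s → ConvexOn ℝ (Ici (τ s)) (κ s)

namespace RegularReward

/-- The extension `κ̄_s (x) := κ_s (max x τ_s)` of `κ_s` to `[0, ∞)`. -/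
noncomputable def kbar (R : RegularReward) (s : ℝ) (x : ℝ) : ℝ :=
  R.κ s (max x (R.τ s))

/-- `M_s(x) = ⌈ln (r' 0 / r' x) / ln s⌉`. -/
noncomputable def M (R : RegularReward) (s : ℝ) (x : ℝ) : ℕ :=
  ⌈Real.log (R.r' 0 / R.r' x) / Real.log s⌉₊

/-- `M̃_s(x) = ⌊ln (r' 0 / r' x) / ln s⌋ + 1`. -/
noncomputable def Mt (R : RegularReward) (s : ℝ) (x : ℝ) : ℕ :=
  ⌊Real.log (R.r' 0 / R.r' x) / Real.log s⌋₊ + 1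

/-- `η_s(x) := ∑_{i=1}^∞ κ̄_s^{(i-1)}(x)`, a finite sum since `κ̄_s^{(i)}(x) = 0` for
`i ≥ M_s(x)`. -/
noncomputable def η (R : RegularReward) (s : ℝ) (x : ℝ) : ℝ :=
  ∑' i : ℕ, (R.kbar s)^[i] x

end RegularReward

/-- **Iterates of `κ̄_s`** (Proposition 6, parts 3–4). For a regular reward function and
`s > 1`: (i) for every `i ≥ 0` and `x ≥ 0`, `κ̄_s^{(i)}(x) = κ_{s^i}(max x τ_s^{(i)})`,
where `τ_s^{(i)} = τ (s^i)` is the unique point with `r' (τ_s^{(i)}) = r' 0 / s^i`;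
(ii) for every `x ≥ 0`, the least nonnegative integer `i` with `κ̄_s^{(i)}(x) = 0`
equals `M_s(x) = ⌈ln (r' 0 / r' x) / ln s⌉`. -/
theorem kbar_iterate_properties (R : RegularReward) (s : ℝ) (hs : 1 < s) :
    (∀ i : ℕ, ∀ x : ℝ, 0 ≤ x →
        (R.kbar s)^[i] x = R.κ (s ^ i) (max x (R.τ (s ^ i)))) ∧
      (∀ x : ℝ, 0 ≤ x →
        IsLeast {i : ℕ | (R.kbar s)^[i] x = 0} (R.M s x)) := by
  have hs1 : (1:ℝ) ≤ s := hs.le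
  have hs0 : (0:ℝ) < s := lt_trans one_pos hs
  have hr0 : 0 < R.r' 0 := R.deriv_pos 0 le_rfl
  have inj : ∀ a b : ℝ, 0 ≤ a → 0 ≤ b → R.r' a = R.r' b → a = b :=
    fun a b ha hb h => R.deriv_strictAnti.injOn ha hb h
  have le_iff : ∀ a b : ℝ, 0 ≤ a → 0 ≤ b → (R.r' b ≤ R.r' a ↔ a ≤ b) := by
    intro a b ha hb
    constructor
    · intro h
      by_contra hlt
      push_neg at hlt
      exact absurd (R.deriv_strictAnti hb ha hlt) (not_lt.2 h)
    · intro h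
      rcases h.eq_or_lt with rfl | h
      · rfl
      · exact (R.deriv_strictAnti ha hb h).le
  have κτ : ∀ t : ℝ, 1 ≤ t → R.κ t (R.τ t) = 0 := by
    intro t ht
    have ht0 : (0:ℝ) < t := lt_of_lt_of_le one_pos ht
    apply inj _ _ (R.κ_nonneg t ht _ le_rfl) le_rfl
    rw [R.κ_spec t ht _ le_rfl, R.τ_spec t ht]
    field_simp
  have τmono : ∀ s1 s2 : ℝ, 1 ≤ s1 → s1 ≤ s2 → R.τ s1 ≤ R.τ s2 := by
    intro s1 s2 h1 h12
    have h2 : (1:ℝ) ≤ s2 := h1.trans h12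
    rw [← le_iff _ _ (R.τ_nonneg _ h1) (R.τ_nonneg _ h2), R.τ_spec _ h1, R.τ_spec _ h2]
    gcongr
  have part1 : ∀ i : ℕ, ∀ x : ℝ, 0 ≤ x →
      (R.kbar s)^[i] x = R.κ (s ^ i) (max x (R.τ (s ^ i))) := by
    intro i
    induction i with
    | zero =>
      intro x hx
      have hτ1 : R.τ (1:ℝ) = 0 := by
        apply inj _ _ (R.τ_nonneg 1 le_rfl) le_rfl
        rw [R.τ_spec 1 le_rfl]; ring
      have hxτ : R.τ (1:ℝ) ≤ x := hτ1 ▸ hx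
      simp only [Function.iterate_zero, id_eq, pow_zero, hτ1, max_eq_left hx]
      refine (inj _ _ (R.κ_nonneg 1 le_rfl x (hτ1 ▸ hx)) hx ?_).symm
      rw [R.κ_spec 1 le_rfl x (hτ1 ▸ hx)]; ring
    | succ i ih =>
      intro x hx
      have hsi : (1:ℝ) ≤ s ^ i := one_le_pow₀ hs1
      have hsi1 : (1:ℝ) ≤ s ^ (i+1) := one_le_pow₀ hs1
      have hsii : s ^ i ≤ s ^ (i+1) := pow_le_pow_right₀ hs1 (Nat.le_succ i)
      have hti : 0 ≤ R.τ (s ^ i) := R.τ_nonneg _ hsi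
      have hti1 : 0 ≤ R.τ (s ^ (i+1)) := R.τ_nonneg _ hsi1
      have htii : R.τ (s ^ i) ≤ R.τ (s ^ (i+1)) := τmono _ _ hsi hsii
      have ht : 0 ≤ R.τ s := R.τ_nonneg s hs1
      rw [Function.iterate_succ_apply', ih x hx]
      set y := max x (R.τ (s ^ i)) with hy
      have hyτ : R.τ (s ^ i) ≤ y := le_max_right _ _
      have hy0 : 0 ≤ y := le_trans hti hyτ
      set z := R.κ (s ^ i) y with hzdef
      have hz0 : 0 ≤ z := R.κ_nonneg _ hsi y hyτ
      have hz : R.r' z = s ^ i * R.r' y := R.κ_spec _ hsi y hyτ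
      have hrt : R.r' (R.τ s) = R.r' 0 / s := R.τ_spec s hs1
      have hrt1 : R.r' (R.τ (s ^ (i+1))) = R.r' 0 / s ^ (i+1) := R.τ_spec _ hsi1
      rcases le_or_gt (R.τ (s ^ (i+1))) x with hcase | hcase
      · -- x ≥ τ (s^(i+1))
        have hyx : y = x := max_eq_left (le_trans htii hcase)
        have hmax1 : max x (R.τ (s ^ (i+1))) = x := max_eq_left hcase
        have hrx : R.r' x ≤ R.r' (R.τ (s ^ (i+1))) := (le_iff _ _ hti1 hx).2 hcase
        have hzt : R.τ s ≤ z := by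
          rw [← le_iff _ _ ht hz0, hrt, hz, hyx]
          calc s ^ i * R.r' x ≤ s ^ i * (R.r' 0 / s ^ (i+1)) := by
                rw [← hrt1]
                exact mul_le_mul_of_nonneg_left hrx (le_trans zero_le_one hsi)
            _ = R.r' 0 / s := by
                rw [pow_succ]
                field_simp
        unfold RegularReward.kbar
        rw [max_eq_left hzt, hmax1]
        apply inj _ _ (R.κ_nonneg s hs1 z hzt) (R.κ_nonneg _ hsi1 x hcase)
        rw [R.κ_spec s hs1 z hzt, R.κ_spec _ hsi1 x hcase, hz, hyx, pow_succ]
        ring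
      · -- x < τ (s^(i+1))
        have hmax1 : max x (R.τ (s ^ (i+1))) = R.τ (s ^ (i+1)) := max_eq_right hcase.le
        have hyle : y ≤ R.τ (s ^ (i+1)) := max_le hcase.le htii
        have hry : R.r' (R.τ (s ^ (i+1))) ≤ R.r' y := (le_iff _ _ hy0 hti1).2 hyle
        have hzt : z ≤ R.τ s := by
          rw [← le_iff _ _ hz0 ht, hrt, hz]
          calc R.r' 0 / s = s ^ i * (R.r' 0 / s ^ (i+1)) := by
                rw [pow_succ]; field_simp
            _ ≤ s ^ i * R.r' y := by
                rw [← hrt1]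
                exact mul_le_mul_of_nonneg_left hry (le_trans zero_le_one hsi)
        unfold RegularReward.kbar
        rw [max_eq_right hzt, hmax1, κτ s hs1, κτ _ hsi1]
  refine ⟨part1, ?_⟩
  intro x hx
  have hrx : 0 < R.r' x := R.deriv_pos x hx
  have hratio : 0 < R.r' 0 / R.r' x := div_pos hr0 hrx
  have hlogs : 0 < Real.log s := Real.log_pos hs
  have key : ∀ i : ℕ, (R.kbar s)^[i] x = 0 ↔
      Real.log (R.r' 0 / R.r' x) / Real.log s ≤ (i : ℝ) := by
    intro i
    have hsi : (1:ℝ) ≤ s ^ i := one_le_pow₀ hs1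
    have hsi0 : (0:ℝ) < s ^ i := pow_pos hs0 i
    have hti : 0 ≤ R.τ (s ^ i) := R.τ_nonneg _ hsi
    have hrti : R.r' (R.τ (s ^ i)) = R.r' 0 / s ^ i := R.τ_spec _ hsi
    have step1 : (R.kbar s)^[i] x = 0 ↔ x ≤ R.τ (s ^ i) := by
      rw [part1 i x hx]
      constructor
      · intro h
        have hm : R.τ (s ^ i) ≤ max x (R.τ (s ^ i)) := le_max_right _ _
        have hm0 : 0 ≤ max x (R.τ (s ^ i)) := le_trans hti hm
        have hspec := R.κ_spec (s ^ i) hsi _ hm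
        rw [h] at hspec
        have heq : R.r' (max x (R.τ (s ^ i))) = R.r' (R.τ (s ^ i)) := by
          rw [hrti]
          field_simp at hspec ⊢
          linarith [hspec]
        have := inj _ _ hm0 hti heq
        calc x ≤ max x (R.τ (s ^ i)) := le_max_left _ _
          _ = R.τ (s ^ i) := this
      · intro h
        rw [max_eq_right h]
        exact κτ _ hsi
    have step2 : x ≤ R.τ (s ^ i) ↔ R.r' 0 / R.r' x ≤ s ^ i := by
      rw [← le_iff _ _ hx hti, hrti, div_le_iff₀ hsi0, div_le_iff₀ hrx, mul_comm]
    have step3 : R.r' 0 / R.r' x ≤ s ^ i ↔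
        Real.log (R.r' 0 / R.r' x) / Real.log s ≤ (i : ℝ) := by
      rw [div_le_iff₀ hlogs, ← Real.log_pow,
        Real.log_le_log_iff hratio (pow_pos hs0 i)]
    rw [step1, step2, step3]
  constructor
  · rw [Set.mem_setOf_eq, key]
    exact Nat.le_ceil _
  · intro i hi
    rw [Set.mem_setOf_eq, key] at hi
    exact Nat.ceil_le.2 hi
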